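/- Let A be a complete Noetherian local ring of prime characteristic p, let H be a T-torsion-free A[T;f]-module, and let I, J be ideals of A. If for some integer α ≥ 0 the A-submodule of H generated by T^α(Ann_H(I·A[T;f])) equals the A-submodule of H generated by T^α(Ann_H(J·A[T;f])), then Ann_H(I·A[T;f]) = Ann_H(J·A[T;f]). -/

import Mathlib

open IsLocalRing

/-- For an `A[T;f]`-module `H` (given by the additive map `T : H → H`) and an ideal
`I ⊆ A`, this is the annihilator `Ann_H (I·A[T;f]) = {h ∈ H : a • T^i h = 0` for all
`a ∈ I`, `i ≥ 0}`. -/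
def annTf {A : Type*} [CommRing A] {H : Type*} [AddCommGroup H] [Module A H]
    (T : H →+ H) (I : Ideal A) : Set H :=
  {h : H | ∀ a ∈ I, ∀ i : ℕ, a • (⇑T)^[i] h = 0}

lemma iter_smul {A : Type*} [CommRing A] {H : Type*} [AddCommGroup H] [Module A H]
    (T : H →+ H) (p : ℕ) (hT : ∀ (a : A) (h : H), T (a • h) = a ^ p • T h)
    (n : ℕ) (a : A) (h : H) : (⇑T)^[n] (a • h) = a ^ p ^ n • (⇑T)^[n] h := by
  induction n with
  | zero => simp
  | succ n ih =>
      rw [Function.iterate_succ_apply', Function.iterate_succ_apply', ih, hT,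
        ← pow_mul, ← pow_succ]

lemma iter_tf {A : Type*} [CommRing A] {H : Type*} [AddCommGroup H] [Module A H]
    (T : H →+ H) (htf : ∀ h : H, T h = 0 → h = 0) (n : ℕ) (h : H)
    (hn : (⇑T)^[n] h = 0) : h = 0 := by
  induction n with
  | zero => exact hn
  | succ n ih =>
      rw [Function.iterate_succ_apply'] at hn
      exact ih (htf _ hn)

/-- `annTf T J` is the carrier of an `A`-submodule. -/
def annTfSubmodule {A : Type*} [CommRing A] {H : Type*} [AddCommGroup H] [Module A H]
    (T : H →+ H) (p : ℕ) (hT : ∀ (a : A) (h : H), T (a • h) = a ^ p • T h)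
    (J : Ideal A) : Submodule A H where
  carrier := annTf T J
  zero_mem' := by
    intro a _ i
    rw [Function.iterate_fixed (map_zero T), smul_zero]
  add_mem' := by
    intro x y hx hy a ha i
    have : (⇑T)^[i] (x + y) = (⇑T)^[i] x + (⇑T)^[i] y := by
      induction i with
      | zero => rfl
      | succ n ih => rw [Function.iterate_succ_apply', Function.iterate_succ_apply',
          Function.iterate_succ_apply', ih, map_add]
    rw [this, smul_add, hx a ha i, hy a ha i, add_zero]
  smul_mem' := by
    intro c x hx a ha i
    rw [iter_smul T p hT, smul_comm, hx a ha i, smul_zero]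

lemma key {A : Type*} [CommRing A] {H : Type*} [AddCommGroup H] [Module A H]
    (T : H →+ H) (p : ℕ) (hp : 0 < p)
    (hT : ∀ (a : A) (h : H), T (a • h) = a ^ p • T h)
    (htf : ∀ h : H, T h = 0 → h = 0)
    (I J : Ideal A) (α : ℕ)
    (hsub : Submodule.span A ((⇑T)^[α] '' annTf T I) ≤
      Submodule.span A ((⇑T)^[α] '' annTf T J)) :
    annTf T I ⊆ annTf T J := by
  intro h hh a ha i
  -- T^α h lies in the span of T^α '' annTf T J, which is contained in annTf T J
  have h1 : (⇑T)^[α] h ∈ Submodule.span A ((⇑T)^[α] '' annTf T J) :=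
    hsub (Submodule.subset_span ⟨h, hh, rfl⟩)
  have himg : (⇑T)^[α] '' annTf T J ⊆ (annTfSubmodule T p hT J : Set H) := by
    rintro _ ⟨g, hg, rfl⟩ b hb j
    rw [← Function.iterate_add_apply]
    exact hg b hb (j + α)
  have h2 : (⇑T)^[α] h ∈ annTf T J :=
    (Submodule.span_le.mpr himg) h1
  -- now kill a • T^[i] h by applying T^[α]
  apply iter_tf (A := A) T htf α
  rw [iter_smul T p hT, ← Function.iterate_add_apply]
  have hmem : a ^ p ^ α ∈ J := J.pow_mem_of_mem ha _ (pow_pos hp α)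
  have := h2 (a ^ p ^ α) hmem i
  rwa [← Function.iterate_add_apply, Nat.add_comm i α] at this

/-- Let `A` be a complete Noetherian local ring of prime
characteristic `p`, let `H` be a `T`-torsion-free `A[T;f]`-module, and let `I`, `J`
be ideals of `A`.  If for some `α ≥ 0` the `A`-submodule of `H` generated by
`T^α(Ann_H(I·A[T;f]))` equals the `A`-submodule generated by `T^α(Ann_H(J·A[T;f]))`,
then `Ann_H(I·A[T;f]) = Ann_H(J·A[T;f])`. -/
theorem statement5 {A : Type*} [CommRing A] [IsNoetherianRing A] [IsLocalRing A]
    [IsAdicComplete (maximalIdeal A) A] (p : ℕ) (hp : p.Prime) [CharP A p]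
    {H : Type*} [AddCommGroup H] [Module A H] (T : H →+ H)
    (hT : ∀ (a : A) (h : H), T (a • h) = a ^ p • T h)
    (htf : ∀ h : H, T h = 0 → h = 0)
    (I J : Ideal A) (α : ℕ)
    (hspan : Submodule.span A ((⇑T)^[α] '' annTf T I) =
      Submodule.span A ((⇑T)^[α] '' annTf T J)) :
    annTf T I = annTf T J :=
  Set.Subset.antisymm
    (key T p hp.pos hT htf I J α hspan.le)
    (key T p hp.pos hT htf J I α hspan.ge)
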